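/- Let W = (V, w) be a weighted graph on n vertices, where w assigns to each unordered pair of distinct vertices a weight in [0,1]. Then W contains a relatively half-full subset on ⌊n/2⌋ or ⌊n/2⌋ + 1 vertices: a subset H ⊆ V with |H| ∈ {⌊n/2⌋, ⌊n/2⌋ + 1} such that for every x ∈ H, the sum of w({x,y}) over y ∈ H \ {x} is at least (1/2) times the sum of w({x,y}) over all y ∈ V \ {x}. -/

import Mathlib

open scoped Classical

open Finset in
noncomputable def dg {V : Type*} [Fintype V] (w : V → V → ℝ) (S : Finset V) (x : V) : ℝ :=
  ∑ y ∈ S.erase x, w x y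

noncomputable def Wt {V : Type*} [Fintype V] (w : V → V → ℝ) (S : Finset V) : ℝ :=
  ∑ x ∈ S, dg w S x

noncomputable def Phi {V : Type*} [Fintype V] (w : V → V → ℝ) (S : Finset V) : ℝ :=
  Wt w S + Wt w Sᶜ

lemma dg_erase {V : Type*} [Fintype V] (w : V → V → ℝ) (S : Finset V) (x : V) :
    dg w (S.erase x) x = dg w S x := by
  simp [dg, Finset.erase_idem]

lemma dg_not_mem {V : Type*} [Fintype V] (w : V → V → ℝ) {S : Finset V} {x : V} (hx : x ∉ S) :
    dg w S x = ∑ y ∈ S, w x y := by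
  rw [dg, Finset.erase_eq_of_notMem hx]

lemma dg_compl_erase {V : Type*} [Fintype V] (w : V → V → ℝ) {S : Finset V} {x : V}
    (hx : x ∈ S) : dg w (S.erase x)ᶜ x = dg w Sᶜ x := by
  have hxc : x ∉ Sᶜ := by simp [hx]
  rw [Finset.compl_erase, dg, Finset.erase_insert hxc, ← dg_not_mem w hxc]

lemma dg_split {V : Type*} [Fintype V] (w : V → V → ℝ) (S : Finset V) (x : V) :
    dg w Finset.univ x = dg w S x + dg w Sᶜ x := by
  have hu : Finset.univ.erase x = (S.erase x) ∪ (Sᶜ.erase x) := by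
    ext y
    by_cases hyS : y ∈ S <;> simp [Finset.mem_erase, hyS]
  have hd : Disjoint (S.erase x) (Sᶜ.erase x) := by
    apply Finset.disjoint_left.mpr
    intro a ha hb
    exact (Finset.mem_compl.mp (Finset.mem_of_mem_erase hb)) (Finset.mem_of_mem_erase ha)
  rw [dg, hu, Finset.sum_union hd]
  rfl

lemma Wt_insert {V : Type*} [Fintype V] (w : V → V → ℝ) (hsymm : ∀ x y, w x y = w y x)
    {S : Finset V} {x : V} (hx : x ∉ S) :
    Wt w (insert x S) = Wt w S + 2 * dg w S x := by
  unfold Wt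
  rw [Finset.sum_insert hx]
  have h1 : dg w (insert x S) x = dg w S x := by
    rw [dg, Finset.erase_insert hx, ← dg_not_mem w hx]
  have h2 : ∀ a ∈ S, dg w (insert x S) a = w a x + dg w S a := by
    intro a ha
    have hax : x ≠ a := fun h => hx (h ▸ ha)
    rw [dg, Finset.erase_insert_of_ne hax.symm.symm, Finset.sum_insert (fun h => hx (Finset.mem_of_mem_erase h))]
    rfl
  rw [h1, Finset.sum_congr rfl h2, Finset.sum_add_distrib]
  have h3 : ∑ a ∈ S, w a x = dg w S x := by
    rw [dg_not_mem w hx]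
    exact Finset.sum_congr rfl fun a _ => hsymm a x
  rw [h3]; ring

lemma Phi_compl {V : Type*} [Fintype V] (w : V → V → ℝ) (S : Finset V) :
    Phi w Sᶜ = Phi w S := by
  simp [Phi, compl_compl, add_comm]

lemma Phi_insert {V : Type*} [Fintype V] (w : V → V → ℝ) (hsymm : ∀ x y, w x y = w y x)
    {S : Finset V} {x : V} (hx : x ∉ S) :
    Phi w (insert x S) = Phi w S + 2 * dg w S x - 2 * dg w Sᶜ x := by
  have hxc : x ∈ Sᶜ := Finset.mem_compl.mpr hx
  have hc : (insert x S)ᶜ = Sᶜ.erase x := Finset.compl_insert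
  have h1 : Wt w Sᶜ = Wt w (Sᶜ.erase x) + 2 * dg w Sᶜ x := by
    nth_rewrite 1 [← Finset.insert_erase hxc]
    rw [Wt_insert w hsymm (Finset.notMem_erase x Sᶜ), dg_erase]
  unfold Phi
  rw [Wt_insert w hsymm hx, hc, h1]
  ring

/-- every weighted graph `(V, w)` with symmetric pair-weights in `[0,1]`
contains a relatively half-full subset `H` on `⌊n/2⌋` or `⌊n/2⌋ + 1` vertices: for every
`x ∈ H`, the weighted degree of `x` inside `H` is at least half its weighted degree in `V`. -/
theorem stmt15 {V : Type*} [Fintype V] (w : V → V → ℝ)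
    (hsymm : ∀ x y : V, w x y = w y x)
    (h0 : ∀ x y : V, x ≠ y → 0 ≤ w x y)
    (h1 : ∀ x y : V, x ≠ y → w x y ≤ 1) :
    ∃ H : Finset V,
      (H.card = Fintype.card V / 2 ∨ H.card = Fintype.card V / 2 + 1) ∧
      ∀ x ∈ H,
        (1/2 : ℝ) * ∑ y ∈ Finset.univ.erase x, w x y ≤ ∑ y ∈ H.erase x, w x y := by
  set n := Fintype.card V with hn
  set k := n / 2 with hk
  set F : Finset (Finset V) := Finset.univ.filter (fun S => S.card = k ∨ S.card = k + 1) with hF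
  have hmemF : ∀ S : Finset V, S ∈ F ↔ (S.card = k ∨ S.card = k + 1) := by
    intro S; simp [hF]
  have hFne : F.Nonempty := by
    obtain ⟨H0, _, hH0c⟩ := Finset.exists_subset_card_eq (s := (Finset.univ : Finset V)) (n := k)
      (by rw [Finset.card_univ, ← hn]; exact Nat.div_le_self n 2)
    exact ⟨H0, (hmemF H0).mpr (Or.inl hH0c)⟩
  obtain ⟨H1, hH1F, hH1max⟩ := F.exists_max_image (Phi w) hFne
  set F2 := F.filter (fun S => Phi w H1 ≤ Phi w S) with hF2
  have hF2ne : F2.Nonempty := ⟨H1, Finset.mem_filter.mpr ⟨hH1F, le_refl _⟩⟩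
  obtain ⟨H, hHF2, hHcardmax⟩ := F2.exists_max_image Finset.card hF2ne
  have hHF : H ∈ F := (Finset.mem_filter.mp hHF2).1
  have hH1le : Phi w H1 ≤ Phi w H := (Finset.mem_filter.mp hHF2).2
  have hmaxPhi : ∀ S ∈ F, Phi w S ≤ Phi w H := fun S hS => (hH1max S hS).trans hH1le
  have hmaxcard : ∀ S ∈ F, Phi w H ≤ Phi w S → S.card ≤ H.card := by
    intro S hS hle
    exact hHcardmax S (Finset.mem_filter.mpr ⟨hS, hH1le.trans hle⟩)
  rcases (hmemF H).mp hHF with hc | hc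
  · -- card H = k
    have hcompl : Hᶜ.card = n - k := by rw [Finset.card_compl, hc, hn]
    have hnk : n - k = k ∨ n - k = k + 1 := by omega
    rcases hnk with hnk | hnk
    · -- n even: use Hᶜ
      refine ⟨Hᶜ, Or.inl (by rw [hcompl, hnk]), ?_⟩
      intro x hx
      have hxH : x ∉ H := Finset.mem_compl.mp hx
      have hinsF : insert x H ∈ F := by
        refine (hmemF _).mpr (Or.inr ?_)
        rw [Finset.card_insert_of_notMem hxH, hc]
      have hlt : Phi w (insert x H) < Phi w H := by
        rcases lt_or_ge (Phi w (insert x H)) (Phi w H) with h | h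
        · exact h
        · exfalso
          have := hmaxcard _ hinsF h
          rw [Finset.card_insert_of_notMem hxH, hc] at this
          omega
      rw [Phi_insert w hsymm hxH] at hlt
      have hdg : dg w H x < dg w Hᶜ x := by linarith
      have hsplit : dg w Finset.univ x = dg w Hᶜ x + dg w (Hᶜ)ᶜ x := dg_split w Hᶜ x
      rw [compl_compl] at hsplit
      show (1/2 : ℝ) * dg w Finset.univ x ≤ dg w Hᶜ x
      linarith
    · -- n odd: contradiction, Hᶜ is a bigger maximizer
      exfalso
      have hcF : Hᶜ ∈ F := (hmemF _).mpr (Or.inr (by rw [hcompl, hnk]))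
      have := hmaxcard Hᶜ hcF (by rw [Phi_compl])
      rw [hcompl, hnk, hc] at this
      omega
  · -- card H = k + 1: use H
    refine ⟨H, Or.inr hc, ?_⟩
    intro x hx
    have hSF : H.erase x ∈ F := by
      refine (hmemF _).mpr (Or.inl ?_)
      rw [Finset.card_erase_of_mem hx, hc]; omega
    have hle : Phi w (H.erase x) ≤ Phi w H := hmaxPhi _ hSF
    have hins : insert x (H.erase x) = H := Finset.insert_erase hx
    have hPhi : Phi w H = Phi w (H.erase x) + 2 * dg w (H.erase x) x
        - 2 * dg w (H.erase x)ᶜ x := by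
      nth_rewrite 1 [← hins]
      exact Phi_insert w hsymm (Finset.notMem_erase x H)
    rw [dg_erase, dg_compl_erase w hx] at hPhi
    have hdg : dg w Hᶜ x ≤ dg w H x := by linarith
    have hsplit : dg w Finset.univ x = dg w H x + dg w Hᶜ x := dg_split w H x
    show (1/2 : ℝ) * dg w Finset.univ x ≤ dg w H x
    linarith
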